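/- arXiv:1806.06543 — 3 statements merged into one kernel-verified Lean document; each statement's English description precedes it below -/
import Mathlib

section
/- Let k be a perfect field of characteristic p > 0, let N be a nonnegative integer with base-p expansion N = (N_{ℓ-1} … N_1 N_0)_p, and let f = ∑ f_n t^n ∈ k[[t]]. Then f_N = [(Λ_{N_{ℓ-1}} ∘ ⋯ ∘ Λ_{N_1} ∘ Λ_{N_0} f)(0)]^{p^ℓ}, where g(0) denotes the constant coefficient of g. -/
/-- The section operator `Λ_r` on `k⟦t⟧`. -/
noncomputable def sectionOp (k : Type*) [Field k] (p : ℕ) [Fact p.Prime]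
    [CharP k p] [PerfectRing k p] (r : ℕ) (g : PowerSeries k) : PowerSeries k :=
  PowerSeries.mk fun n => (frobeniusEquiv k p).symm (PowerSeries.coeff (p * n + r) g)

lemma coeff_eq_sections_aux (k : Type*) [Field k] (p : ℕ) [Fact p.Prime]
    [CharP k p] [PerfectRing k p] (ℓ : ℕ) : ∀ (Nd : ℕ → ℕ) (f : PowerSeries k),
    PowerSeries.coeff (∑ i ∈ Finset.range ℓ, Nd i * p ^ i) f
      = (PowerSeries.constantCoeff
          ((List.range ℓ).foldl (fun g i => sectionOp k p (Nd i) g) f)) ^ p ^ ℓ := by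
  induction ℓ with
  | zero => intro Nd f; simp [PowerSeries.coeff_zero_eq_constantCoeff]
  | succ n ih =>
    intro Nd f
    have hr : List.range (n + 1) = 0 :: (List.range n).map Nat.succ :=
      List.range_succ_eq_map (n := n)
    rw [hr]
    simp only [List.foldl_cons, List.foldl_map]
    have := ih (fun i => Nd (i + 1)) (sectionOp k p (Nd 0) f)
    have hsum : (∑ i ∈ Finset.range (n + 1), Nd i * p ^ i)
        = p * (∑ i ∈ Finset.range n, Nd (i + 1) * p ^ i) + Nd 0 := by
      rw [Finset.sum_range_succ', Finset.mul_sum]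
      simp [pow_succ, mul_comm, mul_assoc, mul_left_comm]
    rw [hsum]
    have hconst : PowerSeries.coeff (p * (∑ i ∈ Finset.range n, Nd (i + 1) * p ^ i) + Nd 0) f
        = (PowerSeries.coeff (∑ i ∈ Finset.range n, Nd (i + 1) * p ^ i)
            (sectionOp k p (Nd 0) f)) ^ p := by
      simp only [sectionOp, PowerSeries.coeff_mk]
      rw [← frobenius_def, ← frobeniusEquiv_apply, RingEquiv.apply_symm_apply]
    rw [hconst, this, pow_succ, ← pow_mul, mul_comm (p ^ n) p, pow_mul]

/-- If `N = ∑_{i<ℓ} N_i p^i` with digits `N_i < p`, then for any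
`f ∈ k⟦t⟧` the `N`-th coefficient of `f` equals
`[(Λ_{N_{ℓ-1}} ∘ ⋯ ∘ Λ_{N_0} f)(0)]^{p^ℓ}`, where `(0)` denotes the constant
coefficient. -/
theorem coeff_eq_sections (k : Type*) [Field k] (p : ℕ) [Fact p.Prime]
    [CharP k p] [PerfectRing k p] (ℓ : ℕ) (Nd : ℕ → ℕ) (hNd : ∀ i < ℓ, Nd i < p)
    (f : PowerSeries k) :
    PowerSeries.coeff (∑ i ∈ Finset.range ℓ, Nd i * p ^ i) f
      = (PowerSeries.constantCoeff
          ((List.range ℓ).foldl (fun g i => sectionOp k p (Nd i) g) f)) ^ p ^ ℓ := by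
  exact coeff_eq_sections_aux k p ℓ Nd f
end

section
/- With notation as above (k perfect of characteristic p, K = k((t))((T)), f ∈ k[[t]], section operators Λ_{r,s} on K and Λ_r on k((t))), the commutation relation Λ_r ∘ res = res ∘ Λ_{r,p-1} holds on K, where res : K → k((t)) is the residue map in T. -/
noncomputable section

set_option maxHeartbeats 1000000

/-- `K = k((t))((T))`. -/
abbrev KK (k : Type*) [Field k] := LaurentSeries (LaurentSeries k)

/-- `t` viewed inside `K = k((t))((T))`. -/
def tKK (k : Type*) [Field k] : KK k := HahnSeries.C (HahnSeries.single (1 : ℤ) (1 : k))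

/-- `t` inside `k((t))`. -/
def tL (k : Type*) [Field k] : LaurentSeries k := HahnSeries.single (1 : ℤ) (1 : k)

/-- `f + T` inside `K = k((t))((T))`, for `f ∈ k⟦t⟧`. -/
def fT (k : Type*) [Field k] (f : PowerSeries k) : KK k :=
  HahnSeries.C (HahnSeries.ofPowerSeries ℤ k f)
    + HahnSeries.single (1 : ℤ) (1 : LaurentSeries k)

/-- The index `p - 1` as an element of `Fin p`. -/
def lastDigit (p : ℕ) [Fact p.Prime] : Fin p :=
  ⟨p - 1, Nat.sub_lt (Fact.out (p := p.Prime)).pos Nat.one_pos⟩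

namespace SRC
open HahnSeries Finset

instance hahnCharP (Γ : Type*) [AddCommMonoid Γ] [PartialOrder Γ] [IsOrderedCancelAddMonoid Γ] (R : Type*)
    [NonAssocSemiring R] (p : ℕ) [CharP R p] : CharP (HahnSeries Γ R) p :=
  charP_of_injective_ringHom (HahnSeries.C_injective (Γ := Γ) (R := R)) p

lemma coeff_sum {Γ R α : Type*} [AddCommMonoid Γ] [PartialOrder Γ] [IsOrderedCancelAddMonoid Γ] [AddCommMonoid R]
    (s : Finset α) (g : α → HahnSeries Γ R) (m : Γ) :
    (∑ i ∈ s, g i).coeff m = ∑ i ∈ s, (g i).coeff m :=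
  map_sum (coeff.addMonoidHom m) _ _

variable {p : ℕ} [hp : Fact p.Prime] {F : Type*} [Field F] [CharP F p]

lemma sum_single_pow (s : Finset ℤ) (c : ℤ → F) :
    (∑ i ∈ s, single i (c i)) ^ p = ∑ i ∈ s, single ((p : ℤ) * i) (c i ^ p) := by
  classical
  induction s using Finset.induction_on with
  | empty => simp [zero_pow hp.out.ne_zero]
  | insert _ _ h ih =>
      rw [Finset.sum_insert h, Finset.sum_insert h, add_pow_char, ih, single_pow,
        nsmul_eq_mul]

lemma coeff_pow_p (x : HahnSeries ℤ F) (m : ℤ) :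
    (x ^ p).coeff m = if (p : ℤ) ∣ m then x.coeff (m / p) ^ p else 0 := by
  classical
  rcases eq_or_ne x 0 with rfl | hx
  · simp [zero_pow hp.out.ne_zero]
  set N : ℤ := |m| with hN
  set x₁ : HahnSeries ℤ F :=
    ⟨fun i => if i ≤ N then x.coeff i else 0, x.isPWO_support.mono (by
      intro i hi
      simp only [Function.mem_support] at hi ⊢
      intro h; apply hi; simp [h])⟩ with hx₁def
  have hx₁coeff : ∀ i, x₁.coeff i = if i ≤ N then x.coeff i else 0 := fun i => rfl
  have hfin : x₁.support.Finite := by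
    apply (Set.finite_Icc x.order N).subset
    intro i hi
    rw [HahnSeries.mem_support, hx₁coeff] at hi
    by_cases h : i ≤ N
    · rw [if_pos h] at hi
      exact ⟨order_le_of_coeff_ne_zero hi, h⟩
    · rw [if_neg h] at hi; exact absurd rfl hi
  have hx₁sum : x₁ = ∑ i ∈ hfin.toFinset, single i (x₁.coeff i) := by
    ext g
    rw [coeff_sum]
    by_cases hg : g ∈ hfin.toFinset
    · rw [Finset.sum_eq_single_of_mem g hg
        (fun b _ hb => coeff_single_of_ne (Ne.symm hb))]
      simp
    · rw [Finset.sum_eq_zero (fun b hb => coeff_single_of_ne (by rintro rfl; exact hg hb))]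
      have : g ∉ x₁.support := by simpa using hg
      simpa [HahnSeries.mem_support, not_not] using this
  set x₂ : HahnSeries ℤ F := x - x₁ with hx₂def
  have hx₂coeff : ∀ i ≤ N, x₂.coeff i = 0 := by
    intro i hi; rw [hx₂def, coeff_sub, hx₁coeff, if_pos hi, sub_self]
  have hx₂p : (x₂ ^ p).coeff m = 0 := by
    rcases eq_or_ne x₂ 0 with h | h
    · simp [h, zero_pow hp.out.ne_zero]
    · have hord : N < x₂.order := by
        by_contra hle; push_neg at hle
        exact (mt coeff_order_eq_zero.mp h) (hx₂coeff _ hle)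
      apply coeff_eq_zero_of_lt_order
      rw [order_pow, nsmul_eq_mul]
      have h0 : (0:ℤ) ≤ x₂.order := le_trans (abs_nonneg m) (le_of_lt hord)
      calc m ≤ |m| := le_abs_self m
        _ < x₂.order := hord
        _ ≤ (p:ℤ) * x₂.order := le_mul_of_one_le_left h0 (by exact_mod_cast hp.out.one_lt.le)
  have hxsplit : x = x₁ + x₂ := by rw [hx₂def]; ring
  have hx₁p : (x₁ ^ p).coeff m = if (p : ℤ) ∣ m then x.coeff (m / p) ^ p else 0 := by
    rw [hx₁sum, sum_single_pow, coeff_sum]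
    by_cases hdvd : (p : ℤ) ∣ m
    · obtain ⟨n, rfl⟩ := hdvd
      have hp0 : (p : ℤ) ≠ 0 := by exact_mod_cast hp.out.ne_zero
      have hnN : n ≤ N := by
        calc n ≤ |n| := le_abs_self n
          _ ≤ (p:ℤ) * |n| := le_mul_of_one_le_left (abs_nonneg n) (by exact_mod_cast hp.out.one_lt.le)
          _ = N := by rw [hN, abs_mul, abs_of_nonneg (by positivity : (0:ℤ) ≤ (p:ℤ))]
      have hdiv : (p:ℤ) * n / p = n := Int.mul_ediv_cancel_left n hp0
      rw [if_pos ⟨n, rfl⟩, hdiv]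
      by_cases hn : n ∈ hfin.toFinset
      · rw [Finset.sum_eq_single_of_mem n hn
          (fun b _ hb => coeff_single_of_ne (by
            intro hcontra
            exact hb (mul_left_cancel₀ hp0 hcontra.symm)))]
        rw [coeff_single_same, hx₁coeff, if_pos hnN]
      · rw [Finset.sum_eq_zero (fun b hb => coeff_single_of_ne (by
          intro hcontra
          apply hn
          rwa [mul_left_cancel₀ hp0 hcontra.symm] at hb))]
        have : x₁.coeff n = 0 := by
          by_contra hc
          exact hn (by simpa using hc)
        rw [hx₁coeff, if_pos hnN] at this
        rw [this, zero_pow hp.out.ne_zero]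
    · rw [if_neg hdvd]
      exact Finset.sum_eq_zero fun b _ => coeff_single_of_ne (by
        rintro rfl; exact hdvd ⟨b, rfl⟩)
  rw [show x ^ p = x₁ ^ p + x₂ ^ p by rw [hxsplit, add_pow_char],
    HahnSeries.coeff_add, hx₂p, add_zero, hx₁p]

lemma coeff_pow_p_mul (x : HahnSeries ℤ F) (n : ℤ) :
    (x ^ p).coeff ((p:ℤ) * n) = x.coeff n ^ p := by
  rw [coeff_pow_p, if_pos ⟨n, rfl⟩,
    Int.mul_ediv_cancel_left n (by exact_mod_cast hp.out.ne_zero)]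

lemma coeff_pow_p_not_dvd (x : HahnSeries ℤ F) (m : ℤ) (h : ¬ (p:ℤ) ∣ m) :
    (x ^ p).coeff m = 0 := by
  rw [coeff_pow_p, if_neg h]

variable {k : Type*} [Field k] [CharP k p]

/-- Uniqueness of the `∑ t^r a_r^p` decomposition. -/
lemma uniq (d : Fin p → LaurentSeries k)
    (h : ∑ r : Fin p, (tL k) ^ (r : ℕ) * (d r) ^ p = 0) (r₀ : Fin p) : d r₀ = 0 := by
  classical
  ext n
  have hcoeff := congrArg (fun y : LaurentSeries k => y.coeff ((p:ℤ) * n + (r₀:ℕ))) h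
  simp only [HahnSeries.coeff_zero] at hcoeff
  rw [coeff_sum] at hcoeff
  have hterm : ∀ r : Fin p,
      ((tL k) ^ (r:ℕ) * (d r) ^ p).coeff ((p:ℤ) * n + (r₀:ℕ))
        = ((d r) ^ p).coeff ((p:ℤ) * n + (r₀:ℕ) - (r:ℕ)) := by
    intro r
    rw [tL, single_pow, one_pow, nsmul_eq_mul, mul_one,
      show (p:ℤ) * n + (r₀:ℕ) = ((p:ℤ) * n + (r₀:ℕ) - (r:ℕ)) + (r:ℕ) by ring,
      coeff_single_mul_add, one_mul]
    congr 1
    ring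
  have hzero : ∀ r : Fin p, r ≠ r₀ →
      ((tL k) ^ (r:ℕ) * (d r) ^ p).coeff ((p:ℤ) * n + (r₀:ℕ)) = 0 := by
    intro r hr
    rw [hterm r]
    apply coeff_pow_p_not_dvd
    intro hdvd
    have h1 : (p:ℤ) ∣ (((r₀:ℕ):ℤ) - ((r:ℕ):ℤ)) := by
      have h2 := dvd_sub hdvd (Dvd.intro n rfl)
      have h3 : (p:ℤ) * n + (r₀:ℕ) - (r:ℕ) - (p:ℤ) * n = ((r₀:ℕ):ℤ) - ((r:ℕ):ℤ) := by ring
      rwa [h3] at h2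
    obtain ⟨c, hc⟩ := h1
    have hr0 : (r₀:ℕ) < p := r₀.isLt
    have hrlt : (r:ℕ) < p := r.isLt
    have hne : (r:ℕ) ≠ (r₀:ℕ) := fun hh => hr (Fin.ext hh)
    have hc0 : c = 0 := by
      rcases lt_trichotomy c 0 with h' | h' | h'
      · nlinarith [hc, Int.ofNat_lt.mpr hr0, Int.ofNat_lt.mpr hrlt]
      · exact h'
      · nlinarith [hc, Int.ofNat_lt.mpr hr0, Int.ofNat_lt.mpr hrlt]
    rw [hc0, mul_zero, sub_eq_zero] at hc
    exact hne (by exact_mod_cast hc.symm)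
  rw [Finset.sum_eq_single_of_mem r₀ (Finset.mem_univ r₀) (fun b _ hb => hzero b hb)] at hcoeff
  rw [hterm r₀, show (p:ℤ) * n + (r₀:ℕ) - (r₀:ℕ) = (p:ℤ) * n by ring,
    coeff_pow_p_mul] at hcoeff
  simpa [HahnSeries.coeff_zero] using pow_eq_zero_iff hp.out.ne_zero |>.mp hcoeff

/-- Residue of a single term `t^r (f+T)^s h^p`. -/
lemma res_term (f : PowerSeries k) (h : KK k) (r s : Fin p) :
    ((tKK k) ^ (r:ℕ) * (fT k f) ^ (s:ℕ) * h ^ p).coeff (-1) =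
      if (s:ℕ) = p - 1 then (tL k) ^ (r:ℕ) * (h.coeff (-1)) ^ p else 0 := by
  classical
  set F : LaurentSeries k := HahnSeries.ofPowerSeries ℤ k f with hF
  have hmain : ((fT k f) ^ (s:ℕ) * h ^ p).coeff (-1)
      = if (s:ℕ) = p - 1 then (h.coeff (-1)) ^ p else 0 := by
    have hexp := add_pow (HahnSeries.C F) (single (1:ℤ) (1:LaurentSeries k)) (s:ℕ)
    rw [show fT k f = HahnSeries.C F + single (1:ℤ) (1:LaurentSeries k) from rfl, hexp,
      Finset.sum_mul]
    rw [coeff_sum]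
    have hterm : ∀ j ∈ Finset.range ((s:ℕ) + 1),
        ((HahnSeries.C F) ^ j * (single (1:ℤ) (1:LaurentSeries k)) ^ ((s:ℕ) - j)
            * (((s:ℕ).choose j : ℕ) : KK k) * h ^ p).coeff (-1)
          = (F ^ j * ((s:ℕ).choose j : LaurentSeries k))
              * (h ^ p).coeff (-1 - (((s:ℕ) - j : ℕ) : ℤ)) := by
      intro j _
      have e1 : (HahnSeries.C F) ^ j * (single (1:ℤ) (1:LaurentSeries k)) ^ ((s:ℕ) - j)
            * (((s:ℕ).choose j : ℕ) : KK k) * h ^ p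
          = HahnSeries.C (F ^ j * ((s:ℕ).choose j : LaurentSeries k))
              * (single ((((s:ℕ) - j : ℕ)) : ℤ) (1:LaurentSeries k) * h ^ p) := by
        rw [single_pow, one_pow, nsmul_eq_mul, mul_one, map_mul, ← map_pow,
          ← map_natCast (HahnSeries.C : LaurentSeries k →+* KK k) ((s:ℕ).choose j)]
        ring
      rw [e1, C_mul_eq_smul, HahnSeries.coeff_smul, smul_eq_mul,
        show (-1 : ℤ) = (-1 - (((s:ℕ) - j : ℕ) : ℤ)) + (((s:ℕ) - j : ℕ) : ℤ) by ring,
        coeff_single_mul_add, one_mul]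
      congr 1
      ring
    rw [Finset.sum_congr rfl hterm]
    have hnotdvd : ∀ m : ℕ, m < p - 1 → ¬ (p:ℤ) ∣ (-1 - (m:ℤ)) := by
      intro m hm hdvd
      have h1 : (p:ℤ) ∣ (1 + (m:ℤ)) := (dvd_neg (a := (p:ℤ)) (b := 1 + (m:ℤ))).mp (by rw [show -(1 + (m:ℤ)) = -1 - (m:ℤ) by ring]; exact hdvd)
      have h2 := Int.le_of_dvd (by positivity) h1
      have hp2 : 2 ≤ p := hp.out.two_le
      omega
    by_cases hs : (s:ℕ) = p - 1
    · rw [if_pos hs]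
      rw [Finset.sum_eq_single_of_mem 0 (Finset.mem_range.mpr (Nat.succ_pos _))]
      · have hps : (((s:ℕ)) : ℤ) = (p:ℤ) - 1 := by
          have hp2 : 2 ≤ p := hp.out.two_le
          omega
        rw [Nat.sub_zero, pow_zero, Nat.choose_zero_right, Nat.cast_one, one_mul, one_mul,
          show (-1 - ((s:ℕ):ℤ)) = (p:ℤ) * (-1) by rw [hps]; ring,
          coeff_pow_p_mul]
      · intro j hj hj0
        have hjlt : j ≤ (s:ℕ) := Nat.lt_succ_iff.mp (Finset.mem_range.mp hj)
        have hmlt : (s:ℕ) - j < p - 1 := by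
          have hp2 : 2 ≤ p := hp.out.two_le
          omega
        rw [coeff_pow_p_not_dvd _ _ (hnotdvd _ hmlt), mul_zero]
    · rw [if_neg hs]
      apply Finset.sum_eq_zero
      intro j hj
      have hjlt : j ≤ (s:ℕ) := Nat.lt_succ_iff.mp (Finset.mem_range.mp hj)
      have hslt : (s:ℕ) < p := s.isLt
      have hmlt : (s:ℕ) - j < p - 1 := by
        have hp2 : 2 ≤ p := hp.out.two_le
        omega
      rw [coeff_pow_p_not_dvd _ _ (hnotdvd _ hmlt), mul_zero]
  have h1 : tKK k ^ (r:ℕ) * fT k f ^ (s:ℕ) * h ^ p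
      = HahnSeries.C (tL k ^ (r:ℕ)) * (fT k f ^ (s:ℕ) * h ^ p) := by
    rw [show tKK k = HahnSeries.C (tL k) from rfl, ← map_pow]
    ring
  rw [h1, C_mul_eq_smul, HahnSeries.coeff_smul, smul_eq_mul, hmain]
  split_ifs <;> simp

end SRC

theorem section_residue_commute (k : Type*) [Field k] (p : ℕ) [Fact p.Prime] [CharP k p]
    [PerfectRing k p] (f : PowerSeries k)
    (Λ : Fin p → Fin p → KK k → KK k)
    (hΛ : ∀ g : KK k, g = ∑ r : Fin p, ∑ s : Fin p,
      (tKK k) ^ (r : ℕ) * (fT k f) ^ (s : ℕ) * (Λ r s g) ^ p)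
    (lam : Fin p → LaurentSeries k → LaurentSeries k)
    (hlam : ∀ g : LaurentSeries k, g = ∑ r : Fin p, (tL k) ^ (r : ℕ) * (lam r g) ^ p)
    (r : Fin p) (g : KK k) :
    lam r (g.coeff (-1 : ℤ)) = (Λ r (lastDigit p) g).coeff (-1 : ℤ) := by
  classical
  have hiff : ∀ s : Fin p, ((s : ℕ) = p - 1) ↔ (s = lastDigit p) :=
    fun s => ⟨fun hh => Fin.ext hh, fun hh => by rw [hh]; rfl⟩
  have hres : g.coeff (-1 : ℤ) = ∑ r' : Fin p,
      tL k ^ (r' : ℕ) * ((Λ r' (lastDigit p) g).coeff (-1 : ℤ)) ^ p := by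
    conv_lhs => rw [hΛ g]
    rw [SRC.coeff_sum]
    refine Finset.sum_congr rfl fun r' _ => ?_
    rw [SRC.coeff_sum,
      Finset.sum_congr rfl fun s _ => SRC.res_term f (Λ r' s g) r' s,
      Finset.sum_congr rfl fun s _ =>
        if_congr (hiff s) rfl rfl,
      Finset.sum_ite_eq' Finset.univ (lastDigit p)
        (fun s => tL k ^ (r' : ℕ) * ((Λ r' s g).coeff (-1 : ℤ)) ^ p),
      if_pos (Finset.mem_univ _)]
  have h2 := hlam (g.coeff (-1 : ℤ))
  have hdiff : ∑ r' : Fin p, tL k ^ (r' : ℕ)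
      * (lam r' (g.coeff (-1 : ℤ)) - (Λ r' (lastDigit p) g).coeff (-1 : ℤ)) ^ p = 0 := by
    have hterm : ∀ r' : Fin p, tL k ^ (r' : ℕ)
        * (lam r' (g.coeff (-1 : ℤ)) - (Λ r' (lastDigit p) g).coeff (-1 : ℤ)) ^ p
        = tL k ^ (r' : ℕ) * (lam r' (g.coeff (-1 : ℤ))) ^ p
          - tL k ^ (r' : ℕ) * ((Λ r' (lastDigit p) g).coeff (-1 : ℤ)) ^ p := by
      intro r'
      rw [sub_pow_char, mul_sub]
    rw [Finset.sum_congr rfl fun r' _ => hterm r', Finset.sum_sub_distrib,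
      ← h2, ← hres, sub_self]
  exact sub_eq_zero.mp (SRC.uniq _ hdiff r)
end
end

section
/- (Commutation of translation with the top section) Let k be a perfect field of characteristic p, α ∈ k, E ∈ k[t,y] irreducible; let τ_α : k(t)[y]/E(t,y) → k(u)[y]/E(u+α, y) be the k-algebra isomorphism sending t ↦ u+α, y ↦ y. Then Λ_{p-1,u} ∘ τ_α = τ_α ∘ Λ_{p-1}, where Λ_{p-1} and Λ_{p-1,u} are the section operators of index p−1 on the respective fields, defined by F^{-1} = ∑_{r=0}^{p-1} t^{r/p} Λ_r and F^{-1} = ∑_{r=0}^{p-1} u^{r/p} Λ_{r,u} with F the Frobenius p-power map. -/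
/-- **commutation of translation with the top section.**
Let `A = k(t)[y]/E(t,y)` and `A' = k(u)[y]/E(u+α,y)` (abstracted here as
fields of characteristic `p`), and let `τ = τ_α : A ≃+* A'` be the `k`-algebra
isomorphism sending `t ↦ u + α` (with `α = γ^p` a `p`-th power, `k` being
perfect).  Let `Λ_r : A → A` and `Λ_{r,u} : A' → A'` be the section operators,
(uniquely) characterized by `x = ∑_{r<p} t^r (Λ_r x)^p` on `A` and
`x = ∑_{r<p} u^r (Λ_{r,u} x)^p` on `A'`.  Then
`Λ_{p-1,u} ∘ τ_α = τ_α ∘ Λ_{p-1}`. -/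
theorem translation_commutes_top_section (p : ℕ) [Fact p.Prime]
    (A A' : Type*) [Field A] [Field A'] [CharP A p] [CharP A' p]
    (τ : A ≃+* A') (t : A) (u γ : A') (hτt : τ t = u + γ ^ p)
    (Λ : Fin p → A → A)
    (hΛ : ∀ x : A, x = ∑ r : Fin p, t ^ (r : ℕ) * (Λ r x) ^ p)
    (hΛuniq : ∀ y z : Fin p → A,
      (∑ r : Fin p, t ^ (r : ℕ) * (y r) ^ p) = (∑ r : Fin p, t ^ (r : ℕ) * (z r) ^ p) → y = z)
    (Λu : Fin p → A' → A')
    (hΛu : ∀ x : A', x = ∑ r : Fin p, u ^ (r : ℕ) * (Λu r x) ^ p)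
    (hΛuuniq : ∀ y z : Fin p → A',
      (∑ r : Fin p, u ^ (r : ℕ) * (y r) ^ p) = (∑ r : Fin p, u ^ (r : ℕ) * (z r) ^ p) → y = z)
    (x : A) :
    Λu (lastDigit p) (τ x) = τ (Λ (lastDigit p) x) := by
  classical
  set y : Fin p → A' := fun s =>
    ∑ r : Fin p, ((r : ℕ).choose (s : ℕ) : A') * γ ^ ((r : ℕ) - (s : ℕ)) * τ (Λ r x) with hy
  have hcast : ∀ n : ℕ, ((n : A')) ^ p = (n : A') := fun n => map_natCast (frobenius A' p) n
  -- main computation: τ x = ∑ s, u^s * (y s)^p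
  have key : τ x = ∑ s : Fin p, u ^ (s : ℕ) * (y s) ^ p := by
    have h1 : τ x = ∑ r : Fin p, (u + γ ^ p) ^ (r : ℕ) * τ (Λ r x) ^ p := by
      conv_lhs => rw [hΛ x]
      rw [map_sum]
      simp [map_mul, map_pow, hτt]
    rw [h1]
    have hys : ∀ s : Fin p, (y s) ^ p =
        ∑ r : Fin p, ((r : ℕ).choose (s : ℕ) : A') * (γ ^ p) ^ ((r : ℕ) - (s : ℕ)) *
          τ (Λ r x) ^ p := by
      intro s
      rw [hy]
      rw [sum_pow_char]
      refine Finset.sum_congr rfl fun r _ => ?_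
      rw [mul_pow, mul_pow, hcast, ← pow_mul, ← pow_mul, Nat.mul_comm]
    calc ∑ r : Fin p, (u + γ ^ p) ^ (r : ℕ) * τ (Λ r x) ^ p
        = ∑ r : Fin p, ∑ s : Fin p,
            u ^ (s : ℕ) * (((r : ℕ).choose (s : ℕ) : A') * (γ ^ p) ^ ((r : ℕ) - (s : ℕ)) *
              τ (Λ r x) ^ p) := by
          refine Finset.sum_congr rfl fun r _ => ?_
          have hinner : (u + γ ^ p) ^ (r : ℕ) =
              ∑ s : Fin p, u ^ (s : ℕ) * (γ ^ p) ^ ((r : ℕ) - (s : ℕ)) *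
                ((r : ℕ).choose (s : ℕ) : A') := by
            rw [add_pow]
            rw [Fin.sum_univ_eq_sum_range
              (fun s => u ^ s * (γ ^ p) ^ ((r : ℕ) - s) * ((r : ℕ).choose s : A')) p]
            apply Finset.sum_subset
            · exact Finset.range_subset_range.2 r.2
            · intro s _ hs
              have : (r : ℕ) < s := by
                simp only [Finset.mem_range, not_lt] at hs; omega
              rw [Nat.choose_eq_zero_of_lt this]
              simp
          rw [hinner, Finset.sum_mul]
          refine Finset.sum_congr rfl fun s _ => ?_
          ring
      _ = ∑ s : Fin p, u ^ (s : ℕ) * (y s) ^ p := by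
          rw [Finset.sum_comm]
          refine Finset.sum_congr rfl fun s _ => ?_
          rw [hys s, Finset.mul_sum]
  have h2 : (fun s => Λu s (τ x)) = y := by
    apply hΛuuniq
    rw [← hΛu (τ x), ← key]
  have h3 := congrFun h2 (lastDigit p)
  rw [h3]
  simp only [hy]
  rw [Finset.sum_eq_single (lastDigit p)]
  · simp [lastDigit]
  · intro r _ hr
    have hlt : (r : ℕ) < p - 1 := by
      have h1 := r.2
      have h2 : (r : ℕ) ≠ p - 1 := fun h => hr (Fin.ext h)
      omega
    rw [Nat.choose_eq_zero_of_lt]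
    · simp
    · simpa [lastDigit] using hlt
  · intro h; exact absurd (Finset.mem_univ _) h
end
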